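/- Let X and Z be real algebraic sets with X ⊆ Z. If there is a surjective polynomial map φ: X → Z, then X = Z. -/
import Mathlib


/-- A real algebraic set in `ℝⁿ`: the common zero locus of finitely many real
polynomials. -/
def IsRealAlgebraicSet {n : ℕ} (X : Set (Fin n → ℝ)) : Prop :=
  ∃ S : Finset (MvPolynomial (Fin n) ℝ),
    X = {x | ∀ p ∈ S, MvPolynomial.eval x p = 0}

/-- A polynomial map between subsets of affine spaces: the restriction of a map
`ℝⁿ → ℝᵐ` whose coordinates are polynomials. -/
def IsPolynomialMap {n m : ℕ} (f : (Fin n → ℝ) → (Fin m → ℝ)) : Prop :=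
  ∃ P : Fin m → MvPolynomial (Fin n) ℝ, ∀ x i, f x i = MvPolynomial.eval x (P i)

lemma aux_aeval_eq_eval {k : ℕ} (x : Fin k → ℝ) (r : MvPolynomial (Fin k) ℝ) :
    MvPolynomial.aeval x r = MvPolynomial.eval x r := rfl

/-- Lemma A.2 of Agol.  Let `X` and `Z` be real algebraic sets with
`X ⊆ Z`.  If there is a surjective polynomial map `φ : X → Z`, then `X = Z`. -/
theorem realAlgebraicSet_eq_of_surjective_polynomial_map
    {n : ℕ} (X Z : Set (Fin n → ℝ))
    (hX : IsRealAlgebraicSet X) (hZ : IsRealAlgebraicSet Z)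
    (hXZ : X ⊆ Z)
    (φ : (Fin n → ℝ) → (Fin n → ℝ))
    (hφ : IsPolynomialMap φ)
    (hmaps : Set.MapsTo φ X Z)
    (hsurj : Set.SurjOn φ X Z) :
    X = Z := by
  classical
  obtain ⟨P, hP⟩ := hφ
  obtain ⟨S, hS⟩ := hX
  by_contra hne
  -- pick a point of `Z \ X`
  obtain ⟨z0, hz0Z, hz0X⟩ : ∃ z, z ∈ Z ∧ z ∉ X := by
    by_contra h
    push_neg at h
    exact hne (Set.Subset.antisymm hXZ h)
  -- pick a polynomial in `S` not vanishing at `z0`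
  obtain ⟨p, hpS, hpz0⟩ : ∃ p ∈ S, MvPolynomial.eval z0 p ≠ 0 := by
    by_contra h
    push_neg at h
    exact hz0X (by rw [hS]; exact h)
  -- a section of φ on Z
  have hsec : ∀ y : Fin n → ℝ, y ∈ Z → ∃ x, x ∈ X ∧ φ x = y := by
    intro y hy
    obtain ⟨x, hx, hxy⟩ := hsurj hy
    exact ⟨x, hx, hxy⟩
  set g : (Fin n → ℝ) → (Fin n → ℝ) := fun y =>
    if h : y ∈ Z then (hsec y h).choose else y with hg
  have hgX : ∀ y ∈ Z, g y ∈ X := by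
    intro y hy; simp only [hg, dif_pos hy]; exact (hsec y hy).choose_spec.1
  have hgφ : ∀ y ∈ Z, φ (g y) = y := by
    intro y hy; simp only [hg, dif_pos hy]; exact (hsec y hy).choose_spec.2
  -- the backward orbit of z0
  set z : ℕ → (Fin n → ℝ) := fun k => g^[k] z0 with hzdef
  have hzZ : ∀ k, z k ∈ Z := by
    intro k
    induction k with
    | zero => exact hz0Z
    | succ k ih =>
      have : z (k + 1) = g (z k) := by
        simp only [hzdef, Function.iterate_succ_apply']
      rw [this]
      exact hXZ (hgX _ ih)
  have hzX : ∀ k, z (k + 1) ∈ X := by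
    intro k
    have : z (k + 1) = g (z k) := by
      simp only [hzdef, Function.iterate_succ_apply']
    rw [this]
    exact hgX _ (hzZ k)
  have hzφ : ∀ k, φ (z (k + 1)) = z k := by
    intro k
    have : z (k + 1) = g (z k) := by
      simp only [hzdef, Function.iterate_succ_apply']
    rw [this]
    exact hgφ _ (hzZ k)
  have hiter : ∀ j m : ℕ, φ^[j] (z (m + j)) = z m := by
    intro j
    induction j with
    | zero => intro m; simp
    | succ j ih =>
      intro m
      rw [Function.iterate_succ_apply]
      have : m + (j + 1) = (m + j) + 1 := by ring
      rw [this, hzφ (m + j)]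
      exact ih m
  -- the pullback polynomials
  set q : ℕ → MvPolynomial (Fin n) ℝ := fun j =>
    (MvPolynomial.bind₁ P)^[j] p with hq
  have hq0 : q 0 = p := rfl
  have hqsucc : ∀ j, q (j + 1) = MvPolynomial.bind₁ P (q j) := by
    intro j; simp only [hq, Function.iterate_succ_apply']
  have hφeval : ∀ x : Fin n → ℝ, φ x = fun i => MvPolynomial.eval x (P i) := by
    intro x; funext i; exact hP x i
  have hqeval : ∀ j (x : Fin n → ℝ),
      MvPolynomial.eval x (q j) = MvPolynomial.eval (φ^[j] x) p := by
    intro j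
    induction j with
    | zero => intro x; simp [hq0]
    | succ j ih =>
      intro x
      rw [hqsucc j]
      have h1 : MvPolynomial.eval x (MvPolynomial.bind₁ P (q j)) =
          MvPolynomial.eval (fun i => MvPolynomial.eval x (P i)) (q j) := by
        have h2 := MvPolynomial.aeval_bind₁ (R := ℝ) (S := ℝ) x P (q j)
        rw [aux_aeval_eq_eval, aux_aeval_eq_eval] at h2
        exact h2
      rw [h1, ← hφeval x, ih (φ x), Function.iterate_succ_apply]
  -- evaluation of q j at z m
  have hqz : ∀ j m : ℕ, MvPolynomial.eval (z (m + j)) (q j) = MvPolynomial.eval (z m) p := by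
    intro j m
    rw [hqeval j, hiter j m]
  -- the ascending chain of ideals
  set J : ℕ →o Ideal (MvPolynomial (Fin n) ℝ) :=
    ⟨fun k => Ideal.span ((S : Set (MvPolynomial (Fin n) ℝ)) ∪ (q '' Set.Iic k)),
     by
      intro a b hab
      apply Ideal.span_mono
      apply Set.union_subset_union_right
      exact Set.image_mono (Set.Iic_subset_Iic.mpr hab)⟩ with hJ
  have hNoeth : IsNoetherian (MvPolynomial (Fin n) ℝ) (MvPolynomial (Fin n) ℝ) := by
    infer_instance
  obtain ⟨N, hN⟩ := (monotone_stabilizes_iff_noetherian).mpr hNoeth J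
  have hmem : q (N + 1) ∈ J N := by
    rw [hN (N + 1) (Nat.le_succ N)]
    apply Ideal.subset_span
    exact Set.mem_union_right _ ⟨N + 1, Set.mem_Iic.mpr le_rfl, rfl⟩
  -- evaluation at z (N + 1) kills J N
  set e : MvPolynomial (Fin n) ℝ →+* ℝ := MvPolynomial.eval (z (N + 1)) with he
  have hker : J N ≤ RingHom.ker e := by
    rw [hJ]
    apply Ideal.span_le.mpr
    rintro r (hr | ⟨j, hj, rfl⟩)
    · simp only [SetLike.mem_coe, RingHom.mem_ker]
      have hx : z (N + 1) ∈ X := hzX N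
      rw [hS] at hx
      exact hx r hr
    · simp only [SetLike.mem_coe, RingHom.mem_ker]
      have hj' : j ≤ N := hj
      have : N + 1 = (N + 1 - j) + j := by omega
      rw [he]
      show MvPolynomial.eval (z (N + 1)) (q j) = 0
      rw [this, hqz j (N + 1 - j)]
      have hx : z (N + 1 - j) ∈ X := by
        have : N + 1 - j = (N - j) + 1 := by omega
        rw [this]
        exact hzX (N - j)
      rw [hS] at hx
      exact hx p hpS
  have h0 : e (q (N + 1)) = 0 := hker hmem
  have h1 : e (q (N + 1)) = MvPolynomial.eval z0 p := by
    rw [he]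
    have h2 := hqz (N + 1) 0
    rw [zero_add] at h2
    exact h2
  rw [h1] at h0
  exact hpz0 h0
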